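/- Suppose there are constants c > 0, ε ∈ (0,1), C > 0 such that ORS(n, ⌈εn⌉) ≥ C·n^c for all sufficiently large n. Then for every fixed integer k ≥ 1 there is a constant C_k > 0 such that for all sufficiently large n, RS(n^k, ⌈εn⌉^k) ≥ C_k · n^{c(k−1)}; in particular, for N ranging over k-th powers, RS(N, ε^k N) ≥ Ω_k(N^{c(k−1)/k}). -/

import Mathlib

/-- `M` is a family of `t` edge-disjoint matchings, each of size `r`,
partitioning the edge set of the simple graph `G` on `n` vertices. -/
def MatchingDecomp {n t : ℕ} (r : ℕ) (G : SimpleGraph (Fin n))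
    (M : Fin t → Finset (Sym2 (Fin n))) : Prop :=
  (∀ i, (M i).card = r) ∧
  (∀ i, ↑(M i) ⊆ G.edgeSet) ∧
  (∀ i, ∀ e ∈ M i, ∀ e' ∈ M i, e ≠ e' → ∀ v : Fin n, v ∈ e → v ∉ e') ∧
  (∀ i j, i ≠ j → Disjoint (M i) (M j)) ∧
  (∀ e ∈ G.edgeSet, ∃ i, e ∈ M i)

/-- Each `M i` is an *induced* matching of `G`: any edge of `G` whose two endpoints
are covered by `M i` belongs to `M i`. -/
def RSProperty {n t : ℕ} (G : SimpleGraph (Fin n))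
    (M : Fin t → Finset (Sym2 (Fin n))) : Prop :=
  ∀ i, ∀ e ∈ G.edgeSet, (∀ v ∈ e, ∃ e' ∈ M i, v ∈ e') → e ∈ M i

/-- Ordered RS property: for `i < j`, no edge of `M j` has both of its endpoints
covered by `M i`. -/
def ORSProperty {n t : ℕ} (G : SimpleGraph (Fin n))
    (M : Fin t → Finset (Sym2 (Fin n))) : Prop :=
  ∀ i j : Fin t, i < j → ∀ e ∈ M j, ¬ (∀ v ∈ e, ∃ e' ∈ M i, v ∈ e')

/-- There is an `n`-vertex `(r,t)`-Ruzsa–Szemerédi graph. -/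
def IsRSGraph (n r t : ℕ) : Prop :=
  ∃ (G : SimpleGraph (Fin n)) (M : Fin t → Finset (Sym2 (Fin n))),
    MatchingDecomp r G M ∧ RSProperty G M

/-- There is an `n`-vertex `(r,t)`-ordered Ruzsa–Szemerédi graph. -/
def IsORSGraph (n r t : ℕ) : Prop :=
  ∃ (G : SimpleGraph (Fin n)) (M : Fin t → Finset (Sym2 (Fin n))),
    MatchingDecomp r G M ∧ ORSProperty G M

/-- `RS(n,r)`: the largest `t` such that an `n`-vertex `(r,t)`-RS graph exists
(`0` if none exists). -/
noncomputable def RSnum (n r : ℕ) : ℕ := sSup {t | IsRSGraph n r t}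

/-- `ORS(n,r)`: the largest `t` such that an `n`-vertex `(r,t)`-ORS graph exists
(`0` if none exists). -/
noncomputable def ORSnum (n r : ℕ) : ℕ := sSup {t | IsORSGraph n r t}

/- ---------------------------------------------------------------------------
Auxiliary material
--------------------------------------------------------------------------- -/

open Finset Filter

lemma sym2_mk_out {α : Type*} (e : Sym2 α) : s(e.out.1, e.out.2) = e := by
  exact Quot.out_eq e

lemma sym2_mem_out_iff {α : Type*} (e : Sym2 α) (v : α) :
    v ∈ e ↔ v = e.out.1 ∨ v = e.out.2 := by
  conv_lhs => rw [← sym2_mk_out e]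
  exact Sym2.mem_iff

/-- counting bound: a matching decomposition with nonempty matchings has at most
`card (Sym2 (Fin n))` parts. -/
lemma decomp_card_le {n t r : ℕ} (hr : 1 ≤ r) {G : SimpleGraph (Fin n)}
    {M : Fin t → Finset (Sym2 (Fin n))} (hM : MatchingDecomp r G M) :
    t ≤ Fintype.card (Sym2 (Fin n)) := by
  obtain ⟨h1, -, -, h4, -⟩ := hM
  have hne : ∀ i, (M i).Nonempty := fun i => Finset.card_pos.mp (by rw [h1 i]; omega)
  choose f hf using hne
  have hinj : Function.Injective f := by
    intro i j hij
    by_contra hne'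
    exact Finset.disjoint_left.mp (h4 i j hne') (hf i) (hij ▸ hf j)
  simpa using Fintype.card_le_of_injective f hinj

lemma bddAbove_RS (n r : ℕ) (hr : 1 ≤ r) : BddAbove {t | IsRSGraph n r t} := by
  refine ⟨Fintype.card (Sym2 (Fin n)), ?_⟩
  rintro t ⟨G, M, hM, -⟩
  exact decomp_card_le hr hM

lemma bddAbove_ORS (n r : ℕ) (hr : 1 ≤ r) : BddAbove {t | IsORSGraph n r t} := by
  refine ⟨Fintype.card (Sym2 (Fin n)), ?_⟩
  rintro t ⟨G, M, hM, -⟩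
  exact decomp_card_le hr hM

/-- shrinking the matchings of an RS graph. -/
lemma isRSGraph_mono {n r r' t : ℕ} (hr : r' ≤ r) (h : IsRSGraph n r t) :
    IsRSGraph n r' t := by
  classical
  obtain ⟨G, M, ⟨h1, h2, h3, h4, h5⟩, h6⟩ := h
  choose N hNsub hNcard using
    fun i => Finset.exists_subset_card_eq (s := M i) (n := r') (by rw [h1 i]; exact hr)
  set E : Set (Sym2 (Fin n)) := ⋃ i, ↑(N i) with hE
  have hmemE : ∀ e, e ∈ E ↔ ∃ i, e ∈ N i := by
    intro e
    simp [hE, Set.mem_iUnion]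
  have hndE : ∀ e ∈ E, ¬ e.IsDiag := by
    intro e he
    obtain ⟨i, hi⟩ := (hmemE e).mp he
    exact G.not_isDiag_of_mem_edgeSet (h2 i (hNsub i hi))
  have hES : (SimpleGraph.fromEdgeSet E).edgeSet = E := by
    rw [SimpleGraph.edgeSet_fromEdgeSet, sdiff_eq_left]
    rw [Set.disjoint_left]
    intro e he hdiag
    exact hndE e he hdiag
  refine ⟨SimpleGraph.fromEdgeSet E, N, ⟨hNcard, ?_, ?_, ?_, ?_⟩, ?_⟩
  · intro i e he
    rw [Finset.mem_coe] at he
    rw [hES]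
    exact (hmemE e).mpr ⟨i, he⟩
  · intro i e he e' he' hne v hv
    exact h3 i e (hNsub i he) e' (hNsub i he') hne v hv
  · intro i j hij
    exact (h4 i j hij).mono (hNsub i) (hNsub j)
  · intro e he
    rw [hES] at he
    exact (hmemE e).mp he
  · -- RS property
    intro i e he hcov
    rw [hES] at he
    obtain ⟨j, hej⟩ := (hmemE e).mp he
    have heG : e ∈ G.edgeSet := h2 j (hNsub j hej)
    have hcov' : ∀ v ∈ e, ∃ e' ∈ M i, v ∈ e' := by
      intro v hv
      obtain ⟨e', he', hv'⟩ := hcov v hv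
      exact ⟨e', hNsub i he', hv'⟩
    have heMi := h6 i e heG hcov'
    have hij : i = j := by
      by_contra hne
      exact Finset.disjoint_left.mp (h4 i j hne) heMi (hNsub j hej)
    rw [hij]
    exact hej

/-- transfer an abstract RS structure to `Fin n`. -/
lemma isRSGraph_transfer {V ι : Type} [Fintype V] [Fintype ι] {n r : ℕ}
    (hV : Fintype.card V = n)
    (E : Set (Sym2 V)) (M : ι → Finset (Sym2 V))
    (hE : ∀ e ∈ E, ¬ e.IsDiag)
    (h1 : ∀ i, (M i).card = r)
    (h2 : ∀ i, ∀ e ∈ M i, e ∈ E)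
    (h3 : ∀ i, ∀ e ∈ M i, ∀ e' ∈ M i, e ≠ e' → ∀ v : V, v ∈ e → v ∉ e')
    (h4 : ∀ i j, i ≠ j → Disjoint (M i) (M j))
    (h5 : ∀ e ∈ E, ∃ i, e ∈ M i)
    (h6 : ∀ i, ∀ e ∈ E, (∀ v ∈ e, ∃ e' ∈ M i, v ∈ e') → e ∈ M i) :
    IsRSGraph n r (Fintype.card ι) := by
  classical
  let eV : V ≃ Fin n := Fintype.equivFinOfCardEq hV
  let eι : Fin (Fintype.card ι) ≃ ι := (Fintype.equivFin ι).symm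
  let emb : Sym2 V ↪ Sym2 (Fin n) := ⟨Sym2.map eV, Sym2.map.injective eV.injective⟩
  have hmm : ∀ (z : Sym2 V) (v : V), eV v ∈ emb z ↔ v ∈ z := by
    intro z v
    simp only [emb, Function.Embedding.coeFn_mk, Sym2.mem_map]
    constructor
    · rintro ⟨a, ha, hav⟩
      rwa [eV.injective hav] at ha
    · exact fun hv => ⟨v, hv, rfl⟩
  have hES : (SimpleGraph.fromEdgeSet (Sym2.map eV '' E)).edgeSet = Sym2.map eV '' E := by
    rw [SimpleGraph.edgeSet_fromEdgeSet, sdiff_eq_left, Set.disjoint_left]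
    rintro e ⟨z, hz, rfl⟩ hdiag
    exact hE z hz ((Sym2.isDiag_map eV.injective).mp hdiag)
  refine ⟨SimpleGraph.fromEdgeSet (Sym2.map eV '' E), fun j => (M (eι j)).map emb,
    ⟨?_, ?_, ?_, ?_, ?_⟩, ?_⟩
  · intro i
    rw [Finset.card_map]
    exact h1 _
  · intro i e he
    rw [Finset.mem_coe, Finset.mem_map] at he
    obtain ⟨z, hz, rfl⟩ := he
    rw [hES]
    exact ⟨z, h2 _ z hz, rfl⟩
  · intro i e he e' he' hne v hv hv'
    rw [Finset.mem_map] at he he'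
    obtain ⟨z, hz, rfl⟩ := he
    obtain ⟨z', hz', rfl⟩ := he'
    have hzz' : z ≠ z' := by rintro rfl; exact hne rfl
    obtain ⟨a, ha, rfl⟩ := Sym2.mem_map.mp hv
    have ha' : a ∈ z' := (hmm z' a).mp hv'
    exact h3 _ z hz z' hz' hzz' a ha ha'
  · intro i j hij
    rw [Finset.disjoint_map]
    exact h4 _ _ (fun hEq => hij (eι.injective hEq))
  · intro e he
    rw [hES] at he
    obtain ⟨z, hzE, rfl⟩ := he
    obtain ⟨i, hi⟩ := h5 z hzE
    refine ⟨eι.symm i, ?_⟩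
    rw [Finset.mem_map]
    exact ⟨z, by rwa [Equiv.apply_symm_apply], rfl⟩
  · -- RS property
    intro j e heE hcov
    rw [hES] at heE
    obtain ⟨z, hzE, rfl⟩ := heE
    have : z ∈ M (eι j) := by
      apply h6 _ z hzE
      intro w hw
      obtain ⟨e', he', hve'⟩ := hcov (eV w) ((hmm z w).mpr hw)
      rw [Finset.mem_map] at he'
      obtain ⟨z', hz', rfl⟩ := he'
      exact ⟨z', hz', (hmm z' w).mp hve'⟩
    exact Finset.mem_map_of_mem _ this

/-- the product construction: from an `(r,t)`-ORS graph on `n` vertices, an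
`(r^k, #{sum-s tuples})`-RS graph on `n^k` vertices. -/
lemma ors_product {n r t k : ℕ} (hk : 1 ≤ k) (h : IsORSGraph n r t) (s : ℕ) :
    IsRSGraph (n ^ k) (r ^ k)
      (Fintype.card {I : Fin k → Fin t // ∑ l, ((I l : ℕ)) = s}) := by
  classical
  obtain ⟨G, M, ⟨h1, h2, h3, h4, h5⟩, hors⟩ := h
  set l0 : Fin k := ⟨0, hk⟩ with hl0
  have hmemM : ∀ {i e}, e ∈ M i → e ∈ G.edgeSet := fun {i e} he => h2 i (Finset.mem_coe.mpr he)
  have hnd : ∀ {i : Fin t} {e}, e ∈ M i → e.out.1 ≠ e.out.2 := by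
    intro i e he hEq
    apply G.not_isDiag_of_mem_edgeSet (hmemM he)
    rw [← sym2_mk_out e]
    exact Sym2.mk_isDiag_iff.mpr hEq
  have hsame : ∀ {i : Fin t} {e e'}, e ∈ M i → e' ∈ M i →
      ∀ {v : Fin n}, v ∈ e → v ∈ e' → e = e' := by
    intro i e e' he he' v hv hv'
    by_contra hne
    exact h3 i e he e' he' hne v hv hv'
  set A : (Fin k → Sym2 (Fin n)) → (Fin k → Fin n) := fun f l => (f l).out.1 with hA
  set B : (Fin k → Sym2 (Fin n)) → (Fin k → Fin n) := fun f l => (f l).out.2 with hB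
  set S := {I : Fin k → Fin t // ∑ l, ((I l : ℕ)) = s} with hS
  set P : S → Finset (Fin k → Sym2 (Fin n)) :=
    fun I => Fintype.piFinset (fun l => M (I.1 l)) with hP
  have hPmem : ∀ {I : S} {f}, f ∈ P I → ∀ l, f l ∈ M (I.1 l) := by
    intro I f hf l
    exact Fintype.mem_piFinset.mp hf l
  set N : S → Finset (Sym2 (Fin k → Fin n)) :=
    fun I => (P I).image (fun f => s(A f, B f)) with hN
  -- key equality analysis
  have keyEq : ∀ {I J : S} {f g}, f ∈ P I → g ∈ P J →
      s(A f, B f) = s(A g, B g) → (∀ l, f l = g l) ∧ I = J := by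
    intro I J f g hf hg hEq
    rw [Sym2.eq_iff] at hEq
    have hfg : ∀ l, f l = g l := by
      intro l
      rcases hEq with ⟨hA1, hB1⟩ | ⟨hA1, hB1⟩
      · have e1 : (f l).out.1 = (g l).out.1 := congrFun hA1 l
        have e2 : (f l).out.2 = (g l).out.2 := congrFun hB1 l
        rw [← sym2_mk_out (f l), ← sym2_mk_out (g l), e1, e2]
      · have e1 : (f l).out.1 = (g l).out.2 := congrFun hA1 l
        have e2 : (f l).out.2 = (g l).out.1 := congrFun hB1 l
        rw [← sym2_mk_out (f l), ← sym2_mk_out (g l), e1, e2, Sym2.eq_swap]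
    refine ⟨hfg, ?_⟩
    have hIJ : ∀ l, I.1 l = J.1 l := by
      intro l
      by_contra hne
      exact Finset.disjoint_left.mp (h4 _ _ hne) (hPmem hf l) (hfg l ▸ hPmem hg l)
    exact Subtype.ext (funext hIJ)
  -- within one tuple, single shared endpoint forces equal source functions
  have keyAA : ∀ {I : S} {f g}, f ∈ P I → g ∈ P I → A f = A g → f = g := by
    intro I f g hf hg hEq
    funext l
    have hv : (f l).out.1 = (g l).out.1 := congrFun hEq l
    exact hsame (hPmem hf l) (hPmem hg l) (Sym2.out_fst_mem _)
      (by rw [hv]; exact Sym2.out_fst_mem _)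
  have keyBB : ∀ {I : S} {f g}, f ∈ P I → g ∈ P I → B f = B g → f = g := by
    intro I f g hf hg hEq
    funext l
    have hv : (f l).out.2 = (g l).out.2 := congrFun hEq l
    exact hsame (hPmem hf l) (hPmem hg l) (Sym2.out_snd_mem _)
      (by rw [hv]; exact Sym2.out_snd_mem _)
  have keyAB : ∀ {I : S} {f g}, f ∈ P I → g ∈ P I → A f = B g → False := by
    intro I f g hf hg hEq
    have hfg : ∀ l, f l = g l := by
      intro l
      have hv : (f l).out.1 = (g l).out.2 := congrFun hEq l
      exact hsame (hPmem hf l) (hPmem hg l) (Sym2.out_fst_mem _)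
        (by rw [hv]; exact Sym2.out_snd_mem _)
    have hv0 : (f l0).out.1 = (g l0).out.2 := congrFun hEq l0
    rw [hfg l0] at hv0
    exact hnd (hPmem hg l0) hv0
  -- the edge set
  set E : Set (Sym2 (Fin k → Fin n)) := ⋃ I : S, ↑(N I) with hEdef
  have hmemE : ∀ e, e ∈ E ↔ ∃ I : S, e ∈ N I := by
    intro e
    simp [hEdef, Set.mem_iUnion]
  have hmemN : ∀ {I : S} {e}, e ∈ N I ↔ ∃ f ∈ P I, s(A f, B f) = e := by
    intro I e
    rw [hN]
    exact Finset.mem_image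
  have hndAB : ∀ {I : S} {f}, f ∈ P I → A f ≠ B f := by
    intro I f hf hEq
    exact hnd (hPmem hf l0) (congrFun hEq l0)
  have hEnd : ∀ e ∈ E, ¬ e.IsDiag := by
    intro e he hdiag
    obtain ⟨I, hI⟩ := (hmemE e).mp he
    obtain ⟨f, hf, rfl⟩ := hmemN.mp hI
    exact hndAB hf (Sym2.mk_isDiag_iff.mp hdiag)
  have hcardV : Fintype.card (Fin k → Fin n) = n ^ k := by simp
  apply isRSGraph_transfer hcardV E N hEnd
  · -- card
    intro I
    rw [hN]
    rw [Finset.card_image_of_injOn (fun f hf g hg hEq => funext fun l => (keyEq hf hg hEq).1 l)]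
    rw [hP, Fintype.card_piFinset]
    simp [h1]
  · -- subset of E
    intro I e he
    exact (hmemE e).mpr ⟨I, he⟩
  · -- matching condition
    intro I e he e' he' hne v hv hv'
    obtain ⟨f, hf, rfl⟩ := hmemN.mp he
    obtain ⟨g, hg, rfl⟩ := hmemN.mp he'
    rw [Sym2.mem_iff] at hv hv'
    apply hne
    have hfg : f = g := by
      rcases hv with rfl | rfl <;> rcases hv' with h' | h'
      · exact keyAA hf hg h'
      · exact (keyAB hf hg h').elim
      · exact (keyAB hg hf h'.symm).elim
      · exact keyBB hf hg h' 
    rw [hfg]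
  · -- disjointness
    intro I J hIJ
    rw [Finset.disjoint_left]
    intro e heI heJ
    obtain ⟨f, hf, hfe⟩ := hmemN.mp heI
    obtain ⟨g, hg, hge⟩ := hmemN.mp heJ
    exact hIJ (keyEq hf hg (hfe.trans hge.symm)).2
  · -- covering
    intro e he
    exact (hmemE e).mp he
  · -- RS property
    intro I e he hcov
    obtain ⟨J, hJ⟩ := (hmemE e).mp he
    obtain ⟨f, hf, rfl⟩ := hmemN.mp hJ
    -- coverage of the two endpoints
    obtain ⟨e1, he1, hv1⟩ := hcov (A f) (Sym2.mem_mk_left _ _)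
    obtain ⟨e2, he2, hv2⟩ := hcov (B f) (Sym2.mem_mk_right _ _)
    obtain ⟨g, hg, hge⟩ := hmemN.mp he1
    obtain ⟨g', hg', hge'⟩ := hmemN.mp he2
    rw [← hge, Sym2.mem_iff] at hv1
    rw [← hge', Sym2.mem_iff] at hv2
    have cover1 : ∀ l, ∃ z ∈ M (I.1 l), (f l).out.1 ∈ z := by
      intro l
      refine ⟨g l, hPmem hg l, ?_⟩
      rcases hv1 with h' | h'
      · have hcl : (f l).out.1 = (g l).out.1 := congrFun h' l
        rw [hcl]; exact Sym2.out_fst_mem _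
      · have hcl : (f l).out.1 = (g l).out.2 := congrFun h' l
        rw [hcl]; exact Sym2.out_snd_mem _
    have cover2 : ∀ l, ∃ z ∈ M (I.1 l), (f l).out.2 ∈ z := by
      intro l
      refine ⟨g' l, hPmem hg' l, ?_⟩
      rcases hv2 with h' | h'
      · have hcl : (f l).out.2 = (g' l).out.1 := congrFun h' l
        rw [hcl]; exact Sym2.out_fst_mem _
      · have hcl : (f l).out.2 = (g' l).out.2 := congrFun h' l
        rw [hcl]; exact Sym2.out_snd_mem _
    have hle : ∀ l, (J.1 l : ℕ) ≤ (I.1 l : ℕ) := by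
      intro l
      by_contra hlt
      push_neg at hlt
      have hlt' : I.1 l < J.1 l := hlt
      apply hors (I.1 l) (J.1 l) hlt' (f l) (hPmem hf l)
      intro v hv
      rw [sym2_mem_out_iff] at hv
      rcases hv with rfl | rfl
      · exact cover1 l
      · exact cover2 l
    have hsum : ∑ l, ((J.1 l : ℕ)) = ∑ l, ((I.1 l : ℕ)) := by rw [J.2, I.2]
    have heq := (Finset.sum_eq_sum_iff_of_le (fun l _ => hle l)).mp hsum
    have hIJ : I = J := by
      apply Subtype.ext
      funext l
      exact Fin.ext (heq l (Finset.mem_univ l)).symm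
    rw [hIJ]
    exact hmemN.mpr ⟨f, hf, rfl⟩

/-- pigeonhole over the tuple-sum classes. -/
lemma exists_sum_class (t k : ℕ) (hk : 1 ≤ k) :
    ∃ s : ℕ, t ^ k ≤ (k * (t - 1) + 1) *
      Fintype.card {I : Fin k → Fin t // ∑ l, ((I l : ℕ)) = s} := by
  classical
  rcases Nat.eq_zero_or_pos t with rfl | ht
  · exact ⟨0, by rw [Nat.zero_pow (by omega)]; exact Nat.zero_le _⟩
  set m := k * (t - 1) + 1 with hm
  have key : ∀ I : Fin k → Fin t, (∑ l, ((I l : ℕ))) ∈ Finset.range m := by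
    intro I
    rw [Finset.mem_range]
    have hb : ∑ l, ((I l : ℕ)) ≤ ∑ _l : Fin k, (t - 1) :=
      Finset.sum_le_sum (fun l _ => by have := (I l).isLt; omega)
    have hc : ∑ _l : Fin k, (t - 1) = k * (t - 1) := by
      rw [Finset.sum_const, Finset.card_univ, Fintype.card_fin, smul_eq_mul]
    omega
  have hpart : (Finset.univ : Finset (Fin k → Fin t)).card =
      ∑ s ∈ Finset.range m,
        (Finset.univ.filter (fun I : Fin k → Fin t => ∑ l, ((I l : ℕ)) = s)).card :=
    Finset.card_eq_sum_card_fiberwise (fun I _ => key I)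
  obtain ⟨s₀, hs₀mem, hs₀⟩ := Finset.exists_max_image (Finset.range m)
    (fun s => (Finset.univ.filter (fun I : Fin k → Fin t => ∑ l, ((I l : ℕ)) = s)).card)
    ⟨0, by simp [hm]⟩
  refine ⟨s₀, ?_⟩
  have hsum : ∑ s ∈ Finset.range m,
      (Finset.univ.filter (fun I : Fin k → Fin t => ∑ l, ((I l : ℕ)) = s)).card ≤
      m * (Finset.univ.filter (fun I : Fin k → Fin t => ∑ l, ((I l : ℕ)) = s₀)).card := by
    calc ∑ s ∈ Finset.range m,
        (Finset.univ.filter (fun I : Fin k → Fin t => ∑ l, ((I l : ℕ)) = s)).card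
        ≤ (Finset.range m).card •
          (Finset.univ.filter (fun I : Fin k → Fin t => ∑ l, ((I l : ℕ)) = s₀)).card :=
          Finset.sum_le_card_nsmul _ _ _ (fun s hs => hs₀ s hs)
      _ = m * _ := by rw [Finset.card_range, smul_eq_mul]
  have hcards : Fintype.card {I : Fin k → Fin t // ∑ l, ((I l : ℕ)) = s₀} =
      (Finset.univ.filter (fun I : Fin k → Fin t => ∑ l, ((I l : ℕ)) = s₀)).card :=
    Fintype.card_subtype _
  have huniv : (Finset.univ : Finset (Fin k → Fin t)).card = t ^ k := by
    simp [Fintype.card_fun]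
  rw [hcards, ← huniv, hpart]
  exact hsum

/-- If `ORS(n, ⌈εn⌉) ≥ C·n^c` for all large `n`, then for every fixed `k ≥ 1` there
is `C_k > 0` with `RS(n^k, ⌈εn⌉^k) ≥ C_k·n^{c(k-1)}` for all large `n`; in particular,
for `N = n^k` a `k`-th power, `RS(N, ⌈ε^k N⌉) ≥ C'·N^{c(k-1)/k}`. -/
theorem rs_power_lower_bound_of_ors
    (c ε C : ℝ) (hc : 0 < c) (hε0 : 0 < ε) (hε1 : ε < 1) (hC : 0 < C)
    (h : ∀ᶠ n : ℕ in Filter.atTop,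
      C * (n : ℝ) ^ c ≤ (ORSnum n ⌈ε * (n : ℝ)⌉₊ : ℝ))
    (k : ℕ) (hk : 1 ≤ k) :
    (∃ Ck : ℝ, 0 < Ck ∧
      ∀ᶠ n : ℕ in Filter.atTop,
        Ck * (n : ℝ) ^ (c * ((k : ℝ) - 1)) ≤ (RSnum (n ^ k) (⌈ε * (n : ℝ)⌉₊ ^ k) : ℝ)) ∧
    (∃ C' : ℝ, 0 < C' ∧
      ∀ᶠ n : ℕ in Filter.atTop,
        C' * ((n ^ k : ℕ) : ℝ) ^ (c * ((k : ℝ) - 1) / (k : ℝ)) ≤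
          (RSnum (n ^ k) ⌈ε ^ k * ((n ^ k : ℕ) : ℝ)⌉₊ : ℝ)) := by
  classical
  set Ck : ℝ := C ^ (k - 1) / k with hCkdef
  have hk0 : (0 : ℝ) < k := by exact_mod_cast hk
  have hCk : 0 < Ck := div_pos (pow_pos hC _) hk0
  -- the main estimate
  have main : ∀ n : ℕ, 1 ≤ n → 1 ≤ C * (n : ℝ) ^ c →
      C * (n : ℝ) ^ c ≤ (ORSnum n ⌈ε * (n : ℝ)⌉₊ : ℝ) →
      (Ck * (n : ℝ) ^ (c * ((k : ℝ) - 1)) ≤ (RSnum (n ^ k) (⌈ε * (n : ℝ)⌉₊ ^ k) : ℝ) ∧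
       Ck * (n : ℝ) ^ (c * ((k : ℝ) - 1)) ≤
         (RSnum (n ^ k) ⌈ε ^ k * ((n ^ k : ℕ) : ℝ)⌉₊ : ℝ)) := by
    intro n hn1 hC1 hORS
    have hnR : (1 : ℝ) ≤ (n : ℝ) := by exact_mod_cast hn1
    set r : ℕ := ⌈ε * (n : ℝ)⌉₊ with hrdef
    set t : ℕ := ORSnum n r with htdef
    have hr1 : 1 ≤ r := Nat.one_le_ceil_iff.mpr (by positivity)
    have ht_real : C * (n : ℝ) ^ c ≤ (t : ℝ) := hORS
    have ht1 : 1 ≤ t := by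
      have : (1 : ℝ) ≤ (t : ℝ) := le_trans hC1 ht_real
      exact_mod_cast this
    -- extract an ORS graph with t matchings
    have hors_mem : IsORSGraph n r t := by
      have hne : {u | IsORSGraph n r u}.Nonempty := by
        by_contra h'
        rw [Set.not_nonempty_iff_eq_empty] at h'
        have : t = 0 := by
          rw [htdef, ORSnum, h', csSup_empty]
          rfl
        omega
      exact Nat.sSup_mem hne (bddAbove_ORS n r hr1)
    obtain ⟨s, hs⟩ := exists_sum_class t k hk
    set T : ℕ := Fintype.card {I : Fin k → Fin t // ∑ l, ((I l : ℕ)) = s} with hTdef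
    have hRS : IsRSGraph (n ^ k) (r ^ k) T := ors_product hk hors_mem s
    clear_value T
    -- numeric chain: t^(k-1) ≤ k * T
    have hm : k * (t - 1) + 1 ≤ k * t := by
      calc k * (t - 1) + 1 ≤ k * (t - 1) + k := Nat.add_le_add_left hk _
        _ = k * ((t - 1) + 1) := by ring
        _ = k * t := by rw [Nat.sub_add_cancel ht1]
    have hstep : t ^ (k - 1) * t ≤ (k * T) * t := by
      have e1 : t ^ (k - 1) * t = t ^ k := by
        rw [← pow_succ]
        congr 1
        exact Nat.sub_add_cancel hk
      calc t ^ (k - 1) * t = t ^ k := e1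
        _ ≤ (k * (t - 1) + 1) * T := hs
        _ ≤ (k * t) * T := Nat.mul_le_mul_right _ hm
        _ = (k * T) * t := by ring
    have hnat : t ^ (k - 1) ≤ k * T := Nat.le_of_mul_le_mul_right hstep ht1
    have hcast : ((t : ℝ)) ^ (k - 1) ≤ (k : ℝ) * (T : ℝ) := by exact_mod_cast hnat
    have hpow : (C * (n : ℝ) ^ c) ^ (k - 1) ≤ ((t : ℝ)) ^ (k - 1) :=
      pow_le_pow_left₀ (by positivity) ht_real _
    have hrw : (C * (n : ℝ) ^ c) ^ (k - 1) = C ^ (k - 1) * (n : ℝ) ^ (c * ((k : ℝ) - 1)) := by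
      rw [mul_pow]
      congr 1
      rw [← Real.rpow_natCast ((n : ℝ) ^ c) (k - 1), ← Real.rpow_mul (by positivity)]
      congr 1
      have : ((k - 1 : ℕ) : ℝ) = (k : ℝ) - 1 := by
        rw [Nat.cast_sub hk, Nat.cast_one]
      rw [this]
    have hnum : Ck * (n : ℝ) ^ (c * ((k : ℝ) - 1)) ≤ (T : ℝ) := by
      rw [hCkdef, div_mul_eq_mul_div, div_le_iff₀ hk0]
      calc C ^ (k - 1) * (n : ℝ) ^ (c * ((k : ℝ) - 1))
          = (C * (n : ℝ) ^ c) ^ (k - 1) := hrw.symm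
        _ ≤ ((t : ℝ)) ^ (k - 1) := hpow
        _ ≤ (k : ℝ) * (T : ℝ) := hcast
        _ = (T : ℝ) * (k : ℝ) := by ring
    constructor
    · -- part 1
      have hT1 : T ≤ RSnum (n ^ k) (r ^ k) :=
        le_csSup (bddAbove_RS _ _ (Nat.one_le_pow _ _ hr1)) hRS
      calc Ck * (n : ℝ) ^ (c * ((k : ℝ) - 1)) ≤ (T : ℝ) := hnum
        _ ≤ (RSnum (n ^ k) (r ^ k) : ℝ) := by exact_mod_cast hT1
    · -- part 2
      have hle2 : ⌈ε ^ k * ((n ^ k : ℕ) : ℝ)⌉₊ ≤ r ^ k := by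
        rw [Nat.ceil_le]
        push_cast
        calc ε ^ k * (n : ℝ) ^ k = (ε * (n : ℝ)) ^ k := by rw [mul_pow]
          _ ≤ ((r : ℝ)) ^ k := pow_le_pow_left₀ (by positivity) (Nat.le_ceil _) _
      have hRS2 : IsRSGraph (n ^ k) (⌈ε ^ k * ((n ^ k : ℕ) : ℝ)⌉₊) T := isRSGraph_mono hle2 hRS
      have hr2 : 1 ≤ ⌈ε ^ k * ((n ^ k : ℕ) : ℝ)⌉₊ := by
        apply Nat.one_le_ceil_iff.mpr
        have : (0 : ℝ) < ((n ^ k : ℕ) : ℝ) := by positivity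
        positivity
      have hT2 : T ≤ RSnum (n ^ k) ⌈ε ^ k * ((n ^ k : ℕ) : ℝ)⌉₊ :=
        le_csSup (bddAbove_RS _ _ hr2) hRS2
      calc Ck * (n : ℝ) ^ (c * ((k : ℝ) - 1)) ≤ (T : ℝ) := hnum
        _ ≤ _ := by exact_mod_cast hT2
  -- eventual hypotheses
  have hbig : Filter.Tendsto (fun n : ℕ => C * (n : ℝ) ^ c) Filter.atTop Filter.atTop := by
    have h1 : Filter.Tendsto (fun x : ℝ => C * x ^ c) Filter.atTop Filter.atTop :=
      (tendsto_rpow_atTop hc).const_mul_atTop hC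
    exact h1.comp tendsto_natCast_atTop_atTop
  have hev : ∀ᶠ n : ℕ in Filter.atTop,
      1 ≤ n ∧ 1 ≤ C * (n : ℝ) ^ c ∧ C * (n : ℝ) ^ c ≤ (ORSnum n ⌈ε * (n : ℝ)⌉₊ : ℝ) := by
    filter_upwards [Filter.eventually_ge_atTop 1, hbig.eventually_ge_atTop 1, h] with
      n h1 h2 h3
    exact ⟨h1, h2, h3⟩
  constructor
  · refine ⟨Ck, hCk, ?_⟩
    filter_upwards [hev] with n hn
    exact (main n hn.1 hn.2.1 hn.2.2).1
  · refine ⟨Ck, hCk, ?_⟩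
    filter_upwards [hev] with n hn
    have hrw : ((n ^ k : ℕ) : ℝ) ^ (c * ((k : ℝ) - 1) / (k : ℝ)) =
        (n : ℝ) ^ (c * ((k : ℝ) - 1)) := by
      have h1 : ((n ^ k : ℕ) : ℝ) = (n : ℝ) ^ ((k : ℕ) : ℝ) := by
        rw [Real.rpow_natCast]
        push_cast
        ring
      rw [h1, ← Real.rpow_mul (by positivity), mul_div_cancel₀ _ (ne_of_gt hk0)]
    rw [hrw]
    exact (main n hn.1 hn.2.1 hn.2.2).2
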